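/- With ρ(u) = θ(θ+1)(1-u)^{θ-1} (θ > 0), κ_{m,r}(ρ) = ∫₀¹ u^m (1-u)^r ρ(u) du, and φ(n) = (θ+1)n/(θ+n), the EPPF ∑ over all orderings (m₁,…,m_K) in the symmetric group of (e₁,…,e_K) of ∏_{j=1}^K κ_{m_j,r_{j-1}}(ρ)/∏_{j=1}^K φ(r_j) equals the Ewens sampling formula EPPF θ^K Γ(θ)/Γ(θ+n) · ∏_{j=1}^K Γ(e_j), where n = e₁+⋯+e_K. -/

import Mathlib

open MeasureTheory Real Set Finset

lemma realBeta (a b : ℝ) (ha : 0 < a) (hb : 0 < b) :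
    ∫ x in Ioo (0:ℝ) 1, x ^ (a-1) * (1-x) ^ (b-1) =
      Real.Gamma a * Real.Gamma b / Real.Gamma (a+b) := by
  have h1 : Complex.betaIntegral a b
      = ((∫ x in Ioo (0:ℝ) 1, x ^ (a-1) * (1-x) ^ (b-1) : ℝ) : ℂ) := by
    rw [Complex.betaIntegral]
    have : ∀ x ∈ uIcc (0:ℝ) 1,
        (x:ℂ) ^ ((a:ℂ)-1) * (1-(x:ℂ)) ^ ((b:ℂ)-1)
          = ((x ^ (a-1) * (1-x) ^ (b-1) : ℝ) : ℂ) := by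
      intro x hx
      rw [Set.uIcc_of_le zero_le_one] at hx
      push_cast
      rw [Complex.ofReal_cpow hx.1, Complex.ofReal_cpow (by linarith [hx.2])]
      push_cast
      ring
    rw [intervalIntegral.integral_congr this, intervalIntegral.integral_ofReal]
    norm_cast
    rw [intervalIntegral.integral_of_le zero_le_one, integral_Ioc_eq_integral_Ioo]
  have h2 := Complex.Gamma_mul_Gamma_eq_betaIntegral
    (s := (a:ℂ)) (t := (b:ℂ)) (by simpa using ha) (by simpa using hb)
  rw [h1] at h2
  simp only [← Complex.ofReal_add, Complex.Gamma_ofReal] at h2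
  have h4 : Real.Gamma a * Real.Gamma b
      = Real.Gamma (a+b) * ∫ x in Ioo (0:ℝ) 1, x ^ (a-1) * (1-x) ^ (b-1) := by
    exact_mod_cast h2
  have hG : Real.Gamma (a+b) ≠ 0 := (Real.Gamma_pos_of_pos (by linarith)).ne'
  field_simp
  linarith [h4]

lemma kappa_val (θ : ℝ) (hθ : 0 < θ) (ρ : ℝ → ℝ)
    (hρ : ∀ u ∈ Ioo (0:ℝ) 1, ρ u = θ * (θ + 1) * (1 - u) ^ (θ - 1)) (m r : ℕ) :
    ∫ u in Ioo (0:ℝ) 1, u ^ m * (1 - u) ^ r * ρ u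
      = θ * (θ+1) * (Real.Gamma (m+1) * Real.Gamma (θ+r) / Real.Gamma ((m+1) + (θ+r))) := by
  have heq : EqOn (fun u : ℝ => u ^ m * (1 - u) ^ r * ρ u)
      (fun u : ℝ => θ * (θ+1) * (u ^ ((m:ℝ)+1-1) * (1-u) ^ ((θ+(r:ℝ))-1))) (Ioo 0 1) := by
    intro u hu
    have h0 : (0:ℝ) < u := hu.1
    have h1 : (0:ℝ) < 1 - u := by linarith [hu.2]
    simp only
    rw [hρ u hu]
    rw [show (m:ℝ)+1-1 = (m:ℝ) by ring, Real.rpow_natCast]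
    rw [show (θ+(r:ℝ))-1 = (r:ℝ) + (θ-1) by ring, Real.rpow_add h1, Real.rpow_natCast]
    ring
  rw [MeasureTheory.setIntegral_congr_fun measurableSet_Ioo heq]
  rw [MeasureTheory.integral_const_mul]
  rw [realBeta ((m:ℝ)+1) (θ+(r:ℝ)) (by positivity) (by positivity)]

lemma succ_filter_sum {K : ℕ} (f : Fin (K+1) → ℕ) (j : Fin K) :
    ∑ i ∈ Finset.univ.filter (fun i => j.succ ≤ i), f i
      = ∑ i ∈ Finset.univ.filter (fun i => j ≤ i), f i.succ := by
  rw [Finset.sum_filter, Finset.sum_filter, Fin.sum_univ_succ]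
  have h0 : ¬ (j.succ ≤ (0 : Fin (K+1))) := by
    simp [Fin.le_def]
  rw [if_neg h0, zero_add]
  refine Finset.sum_congr rfl fun i _ => ?_
  simp [Fin.succ_le_succ_iff]

lemma perm_suffix_sum (K : ℕ) (e : Fin K → ℕ) (he : ∀ j, 1 ≤ e j) :
    ∑ σ : Equiv.Perm (Fin K),
      ∏ j : Fin K, ((∑ i ∈ Finset.univ.filter (fun i => j ≤ i), e (σ i) : ℕ) : ℝ)⁻¹
      = (∏ j, (e j : ℝ))⁻¹ := by
  induction K with
  | zero => simp
  | succ K IH =>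
    have hN : ((∑ i, e i : ℕ) : ℝ) ≠ 0 := by
      have : 0 < ∑ i, e i :=
        Finset.sum_pos (fun i _ => he i) Finset.univ_nonempty
      exact_mod_cast this.ne'
    have hP : ∀ j : Fin (K+1), ((e j : ℝ)) ≠ 0 := fun j => by
      exact_mod_cast (he j).trans_lt' (by norm_num) |>.ne'
    rw [← Equiv.sum_comp (Equiv.Perm.decomposeFin.symm)
      (fun σ => ∏ j : Fin (K+1),
        ((∑ i ∈ Finset.univ.filter (fun i => j ≤ i), e (σ i) : ℕ) : ℝ)⁻¹),
      Fintype.sum_prod_type]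
    have key : ∀ (p : Fin (K+1)) (τ : Equiv.Perm (Fin K)),
        (∏ j : Fin (K+1), ((∑ i ∈ Finset.univ.filter (fun i => j ≤ i),
            e (Equiv.Perm.decomposeFin.symm (p, τ) i) : ℕ) : ℝ)⁻¹)
        = ((∑ i, e i : ℕ):ℝ)⁻¹ *
          ∏ j : Fin K, ((∑ i ∈ Finset.univ.filter (fun i => j ≤ i),
            (fun i => e (Equiv.swap 0 p i.succ)) (τ i) : ℕ) : ℝ)⁻¹ := by
      intro p τ
      rw [Fin.prod_univ_succ]
      congr 1
      · congr 1
        have : Finset.univ.filter (fun i : Fin (K+1) => (0:Fin (K+1)) ≤ i) = Finset.univ := by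
          simp [Fin.zero_le]
        rw [this]
        norm_cast
        exact Equiv.sum_comp _ e
      · refine Finset.prod_congr rfl fun j _ => ?_
        congr 1
        rw [succ_filter_sum]
        norm_cast
        refine Finset.sum_congr rfl fun i _ => ?_
        rw [Equiv.Perm.decomposeFin_symm_apply_succ]
    simp only [key]
    have hprod : ∀ p : Fin (K+1),
        ((e p : ℝ)) * ∏ i : Fin K, ((e (Equiv.swap 0 p i.succ)):ℝ)
          = ∏ i : Fin (K+1), (e i : ℝ) := by
      intro p
      have h := Fin.prod_univ_succ (f := fun i : Fin (K+1) => ((e (Equiv.swap 0 p i)):ℝ))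
      rw [Equiv.prod_comp (Equiv.swap 0 p) (fun i => (e i : ℝ))] at h
      rw [h, Equiv.swap_apply_left]
    have step : ∀ p : Fin (K+1),
        (∑ τ : Equiv.Perm (Fin K), ((∑ i, e i : ℕ):ℝ)⁻¹ *
          ∏ j : Fin K, ((∑ i ∈ Finset.univ.filter (fun i => j ≤ i),
            (fun i => e (Equiv.swap 0 p i.succ)) (τ i) : ℕ) : ℝ)⁻¹)
        = ((∑ i, e i : ℕ):ℝ)⁻¹ * ((e p : ℝ) * (∏ i : Fin (K+1), (e i : ℝ))⁻¹) := by
      intro p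
      rw [← Finset.mul_sum,
        IH (fun i => e (Equiv.swap 0 p i.succ)) (fun i => he _)]
      congr 1
      rw [← hprod p, mul_inv, ← mul_assoc, mul_inv_cancel₀ (hP p), one_mul]
    simp only [step]
    rw [← Finset.mul_sum, ← Finset.sum_mul]
    rw [show (∑ p : Fin (K+1), (e p : ℝ)) = ((∑ i, e i : ℕ):ℝ) by push_cast; ring]
    rw [← mul_assoc, inv_mul_cancel₀ hN, one_mul]

lemma perm_prefix_sum (K : ℕ) (e : Fin K → ℕ) (he : ∀ j, 1 ≤ e j) :
    ∑ σ : Equiv.Perm (Fin K),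
      ∏ j : Fin K, ((∑ i ∈ Finset.univ.filter (fun i => i ≤ j), e (σ i) : ℕ) : ℝ)⁻¹
      = (∏ j, (e j : ℝ))⁻¹ := by
  rw [← perm_suffix_sum K e he]
  rw [← Equiv.sum_comp (Equiv.mulRight (Fin.revPerm : Equiv.Perm (Fin K)))
    (fun σ => ∏ j : Fin K,
      ((∑ i ∈ Finset.univ.filter (fun i => i ≤ j), e (σ i) : ℕ) : ℝ)⁻¹)]
  refine Finset.sum_congr rfl fun σ _ => ?_
  simp only [Equiv.coe_mulRight, Equiv.Perm.coe_mul, Function.comp_apply]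
  rw [← Equiv.prod_comp (Fin.revPerm : Equiv.Perm (Fin K))
    (fun j => ((∑ i ∈ Finset.univ.filter (fun i => j ≤ i), e (σ i) : ℕ) : ℝ)⁻¹)]
  refine Finset.prod_congr rfl fun j _ => ?_
  congr 1
  rw [Finset.sum_filter, Finset.sum_filter]
  congr 1
  apply Fintype.sum_equiv (Fin.revPerm : Equiv.Perm (Fin K))
  intro x
  simp only [Fin.revPerm_apply, Equiv.Perm.coe_mul, Function.comp_apply, Fin.rev_rev]
  congr 1
  rw [show (x ≤ j) = (j.rev ≤ x.rev) from (propext Fin.rev_le_rev).symm]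

lemma prod_range_div_telescope (f : ℕ → ℝ) (hf : ∀ k, f k ≠ 0) (K : ℕ) :
    ∏ k ∈ Finset.range K, f k / f (k+1) = f 0 / f K := by
  induction K with
  | zero => simp [div_self (hf 0)]
  | succ K ih =>
    rw [Finset.prod_range_succ, ih, div_mul_div_comm, mul_comm (f 0) (f K),
      mul_div_mul_left _ _ (hf K)]

theorem ordered_ESF_eppf_is_ewens
    (θ : ℝ) (hθ : 0 < θ)
    (ρ : ℝ → ℝ) (hρ : ∀ u ∈ Ioo (0:ℝ) 1, ρ u = θ * (θ + 1) * (1 - u) ^ (θ - 1))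
    (κ : ℕ → ℕ → ℝ)
    (hκ : ∀ m r : ℕ, κ m r = ∫ u in Ioo (0:ℝ) 1, u ^ m * (1 - u) ^ r * ρ u)
    (φ : ℕ → ℝ) (hφ : ∀ n : ℕ, φ n = (θ + 1) * n / (θ + n))
    (K : ℕ) (hK : 0 < K) (e : Fin K → ℕ) (he : ∀ j, 1 ≤ e j)
    (n : ℕ) (hn : n = ∑ j, e j) :
    ∑ σ : Equiv.Perm (Fin K),
        (∏ j : Fin K, κ (e (σ j)) (∑ i ∈ Finset.univ.filter (fun i => i < j), e (σ i)))
          / (∏ j : Fin K, φ (∑ i ∈ Finset.univ.filter (fun i => i ≤ j), e (σ i)))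
      = θ ^ K * Real.Gamma θ / Real.Gamma (θ + n) * ∏ j : Fin K, Real.Gamma (e j) := by
  have hκ' : ∀ m r : ℕ, κ m r
      = θ * (θ+1) * (Real.Gamma (m+1) * Real.Gamma (θ+r) / Real.Gamma ((m+1) + (θ+r))) :=
    fun m r => by rw [hκ]; exact kappa_val θ hθ ρ hρ m r
  have main : ∀ σ : Equiv.Perm (Fin K),
      (∏ j : Fin K, κ (e (σ j)) (∑ i ∈ Finset.univ.filter (fun i => i < j), e (σ i)))
        / (∏ j : Fin K, φ (∑ i ∈ Finset.univ.filter (fun i => i ≤ j), e (σ i)))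
      = (θ ^ K * Real.Gamma θ / Real.Gamma (θ + n) * ∏ j : Fin K, ((e j).factorial : ℝ)) *
        ∏ j : Fin K, ((∑ i ∈ Finset.univ.filter (fun i => i ≤ j), e (σ i) : ℕ) : ℝ)⁻¹ := by
    intro σ
    set S : ℕ → ℕ := fun k => ∑ i ∈ Finset.univ.filter (fun i : Fin K => (i:ℕ) < k), e (σ i)
      with hS
    have hSlt : ∀ j : Fin K,
        (∑ i ∈ Finset.univ.filter (fun i => i < j), e (σ i)) = S j.val := by
      intro j
      apply Finset.sum_congr _ (fun _ _ => rfl)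
      ext i
      simp only [Finset.mem_filter, Finset.mem_univ, true_and, Fin.lt_def]
    have hSle : ∀ j : Fin K,
        (∑ i ∈ Finset.univ.filter (fun i => i ≤ j), e (σ i)) = S (j.val+1) := by
      intro j
      apply Finset.sum_congr _ (fun _ _ => rfl)
      ext i
      simp only [Finset.mem_filter, Finset.mem_univ, true_and, Fin.le_def, Nat.lt_succ_iff]
    have hstep : ∀ j : Fin K, S (j.val + 1) = S j.val + e (σ j) := by
      intro j
      have hfil : Finset.univ.filter (fun i : Fin K => (i:ℕ) < j.val+1)
          = insert j (Finset.univ.filter (fun i : Fin K => (i:ℕ) < j.val)) := by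
        ext i
        simp only [Finset.mem_filter, Finset.mem_insert, Finset.mem_univ, true_and]
        rw [Nat.lt_succ_iff, le_iff_lt_or_eq, Fin.ext_iff.symm]
        tauto
      rw [hS]
      simp only
      rw [hfil, Finset.sum_insert (by simp)]
      ring
    have hS0 : S 0 = 0 := by simp [hS]
    have hSK : S K = n := by
      have hfil : Finset.univ.filter (fun i : Fin K => (i:ℕ) < K) = Finset.univ := by
        ext i; simp [i.isLt]
      rw [hS]
      simp only
      rw [hfil, hn]
      exact Equiv.sum_comp σ e
    have hpos : ∀ k, (0:ℝ) < θ + S k := fun k => by positivity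
    have hΓne : ∀ k, Real.Gamma (θ + S k) ≠ 0 := fun k => (Real.Gamma_pos_of_pos (hpos k)).ne'
    have htpos : ∀ j : Fin K, 0 < S (j.val+1) := by
      intro j; rw [hstep]; have := he (σ j); omega
    have hA : ∀ j : Fin K, κ (e (σ j)) (S j.val) / φ (S (j.val+1))
        = (θ * ((e (σ j)).factorial : ℝ) * ((S (j.val+1) : ℕ) : ℝ)⁻¹)
          * (Real.Gamma (θ + S j.val) / Real.Gamma (θ + S (j.val+1))) := by
      intro j
      rw [hκ', hφ]
      have hm : ((e (σ j) : ℝ)+1) + (θ + (S j.val : ℝ)) = (θ + (S (j.val+1) : ℝ)) + 1 := by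
        rw [hstep j]; push_cast; ring
      rw [hm, Real.Gamma_add_one (hpos _).ne', Real.Gamma_nat_eq_factorial]
      have h1 : (0:ℝ) < ((S (j.val+1):ℕ) : ℝ) := by exact_mod_cast htpos j
      have h2 : θ + 1 ≠ 0 := by positivity
      have h3 := hΓne j.val
      have h4 := hΓne (j.val+1)
      have h5 := (hpos (j.val+1)).ne'
      field_simp
    rw [← Finset.prod_div_distrib]
    have step1 : ∏ j : Fin K,
        (κ (e (σ j)) (∑ i ∈ Finset.univ.filter (fun i => i < j), e (σ i))
          / φ (∑ i ∈ Finset.univ.filter (fun i => i ≤ j), e (σ i)))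
        = ∏ j : Fin K, ((θ * ((e (σ j)).factorial : ℝ) * ((S (j.val+1) : ℕ) : ℝ)⁻¹)
          * (Real.Gamma (θ + S j.val) / Real.Gamma (θ + S (j.val+1)))) := by
      refine Finset.prod_congr rfl fun j _ => ?_
      rw [hSlt, hSle]
      exact hA j
    rw [step1, Finset.prod_mul_distrib, Finset.prod_mul_distrib, Finset.prod_mul_distrib,
      Finset.prod_const, Finset.card_univ, Fintype.card_fin]
    have tele : ∏ j : Fin K, (Real.Gamma (θ + S j.val) / Real.Gamma (θ + S (j.val+1)))
        = Real.Gamma θ / Real.Gamma (θ + n) := by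
      rw [Fin.prod_univ_eq_prod_range
        (fun k => Real.Gamma (θ + S k) / Real.Gamma (θ + S (k+1))) K]
      rw [prod_range_div_telescope (fun k => Real.Gamma (θ + S k)) hΓne K]
      rw [hS0, hSK]
      norm_num
    rw [tele]
    have hfacprod : ∏ j : Fin K, ((e (σ j)).factorial : ℝ)
        = ∏ j : Fin K, ((e j).factorial : ℝ) :=
      Equiv.prod_comp σ (fun j => ((e j).factorial : ℝ))
    rw [hfacprod]
    have hinvprod : ∏ j : Fin K, ((S (j.val+1) : ℕ) : ℝ)⁻¹
        = ∏ j : Fin K, ((∑ i ∈ Finset.univ.filter (fun i => i ≤ j), e (σ i) : ℕ) : ℝ)⁻¹ := by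
      refine Finset.prod_congr rfl fun j _ => ?_
      rw [hSle]
    rw [hinvprod]
    ring
  rw [Finset.sum_congr rfl (fun σ _ => main σ), ← Finset.mul_sum, perm_prefix_sum K e he]
  have hfac : ∀ j : Fin K, ((e j).factorial : ℝ) = (e j : ℝ) * Real.Gamma (e j) := by
    intro j
    obtain ⟨m, hm⟩ : ∃ m, e j = m + 1 := ⟨e j - 1, by have := he j; omega⟩
    rw [hm]
    push_cast
    rw [Real.Gamma_nat_eq_factorial]
    push_cast [Nat.factorial_succ]
    ring
  rw [Finset.prod_congr rfl (fun j _ => hfac j), Finset.prod_mul_distrib]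
  have hEne : (∏ j : Fin K, (e j : ℝ)) ≠ 0 := by
    refine Finset.prod_ne_zero_iff.mpr fun j _ => ?_
    have := he j
    positivity
  field_simp
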